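/- Let λ > 0 and let b : [0,∞) → ℝ be continuous, nonnegative and integrable. Suppose y : [s,∞) → ℝ solves y'' + b(t)y' - λ²y = 0 with y(s) = 1, y'(s) = 0. Then y(t) ≥ e^{-‖b‖_{L¹}}·cosh(λ(t-s)) for all t ≥ s. -/

import Mathlib

open MeasureTheory Set

private lemma stmt19_mono_aux {f : ℝ → ℝ} {f' : ℝ → ℝ} {a b : ℝ} (hab : a ≤ b)
    (hc : ContinuousOn f (Set.Icc a b))
    (hd : ∀ x ∈ Set.Ioo a b, HasDerivAt f (f' x) x)
    (h0 : ∀ x ∈ Set.Ioo a b, 0 ≤ f' x) :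
    ∀ x ∈ Set.Icc a b, f a ≤ f x := by
  intro x hx
  have hm : MonotoneOn f (Set.Icc a b) := by
    apply monotoneOn_of_deriv_nonneg (convex_Icc a b) hc
    · intro z hz
      rw [interior_Icc] at hz
      exact ((hd z hz).differentiableAt).differentiableWithinAt
    · intro z hz
      rw [interior_Icc] at hz
      rw [(hd z hz).deriv]
      exact h0 z hz
  exact hm (Set.left_mem_Icc.mpr hab) hx hx.1

private lemma stmt19_core (lam : ℝ) (hlam : 0 < lam) (b B : ℝ → ℝ) (β : ℝ)
    (s : ℝ) (hs : 0 ≤ s)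
    (hb_nonneg : ∀ t ≥ (0:ℝ), 0 ≤ b t)
    (hBd : ∀ x, s < x → HasDerivAt B (b x) x)
    (hBc : ∀ T, s ≤ T → ContinuousOn B (Set.Icc s T))
    (hBs : B s = 0) (hBle : ∀ t, s ≤ t → B t ≤ β)
    (y y' y'' : ℝ → ℝ)
    (hy : ∀ t ≥ s, HasDerivAt y (y' t) t)
    (hy' : ∀ t ≥ s, HasDerivAt y' (y'' t) t)
    (hode : ∀ t ≥ s, y'' t + b t * y' t - lam ^ 2 * y t = 0)
    (hys : y s = 1) (hy's : y' s = 0) :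
    ∀ t ≥ s, y t ≥ Real.exp (-β) * Real.cosh (lam * (t - s)) := by
  have hyc : ∀ T, s ≤ T → ContinuousOn y (Set.Icc s T) := by
    intro T hT u hu
    exact ((hy u hu.1).continuousAt).continuousWithinAt
  have hy'c : ∀ T, s ≤ T → ContinuousOn y' (Set.Icc s T) := by
    intro T hT u hu
    exact ((hy' u hu.1).continuousAt).continuousWithinAt
  -- Step 1 key lemma
  have keyA : ∀ t₁, s ≤ t₁ → (∀ u ∈ Set.Ico s t₁, 0 ≤ y u) → 1 ≤ y t₁ := by
    intro t₁ ht₁ hpos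
    have hwc : ContinuousOn (fun t => Real.exp (B t) * y' t) (Set.Icc s t₁) :=
      ((hBc t₁ ht₁).rexp).mul (hy'c t₁ ht₁)
    have hwd : ∀ x ∈ Set.Ioo s t₁, HasDerivAt (fun t => Real.exp (B t) * y' t)
        (Real.exp (B x) * (b x * y' x + y'' x)) x := by
      intro x hx
      have h1 := ((hBd x hx.1).exp).mul (hy' x hx.1.le)
      refine h1.congr_deriv ?_
      ring
    have hw0 : ∀ x ∈ Set.Ioo s t₁, 0 ≤ Real.exp (B x) * (b x * y' x + y'' x) := by
      intro x hx
      have hEq : b x * y' x + y'' x = lam ^ 2 * y x := by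
        have := hode x hx.1.le
        linarith
      rw [hEq]
      have hyx : 0 ≤ y x := hpos x ⟨hx.1.le, hx.2⟩
      positivity
    have hge := stmt19_mono_aux ht₁ hwc hwd hw0
    have hy'ge : ∀ x ∈ Set.Icc s t₁, 0 ≤ y' x := by
      intro x hx
      have h := hge x hx
      simp only [hy's, mul_zero] at h
      nlinarith [Real.exp_pos (B x)]
    have hmono : ∀ x ∈ Set.Icc s t₁, y s ≤ y x := by
      apply stmt19_mono_aux ht₁ (hyc t₁ ht₁)
      · intro x hx; exact hy x hx.1.le
      · intro x hx; exact hy'ge x ⟨hx.1.le, hx.2.le⟩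
    have := hmono t₁ ⟨ht₁, le_refl _⟩
    rwa [hys] at this
  -- Step 1: y ≥ 0 on [s, ∞)
  have hy_nonneg : ∀ t, s ≤ t → 0 ≤ y t := by
    intro t ht
    by_contra hneg
    push_neg at hneg
    have hZne : (Set.Icc s t ∩ y ⁻¹' Set.Iic 0).Nonempty := ⟨t, ⟨ht, le_refl _⟩, hneg.le⟩
    have hZclosed : IsClosed (Set.Icc s t ∩ y ⁻¹' Set.Iic 0) :=
      (hyc t ht).preimage_isClosed_of_isClosed isClosed_Icc isClosed_Iic
    have hZbdd : BddBelow (Set.Icc s t ∩ y ⁻¹' Set.Iic 0) := ⟨s, fun u hu => hu.1.1⟩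
    have ht₀Z : sInf (Set.Icc s t ∩ y ⁻¹' Set.Iic 0) ∈ Set.Icc s t ∩ y ⁻¹' Set.Iic 0 :=
      hZclosed.csInf_mem hZne hZbdd
    have ht₀s : s ≤ sInf (Set.Icc s t ∩ y ⁻¹' Set.Iic 0) := ht₀Z.1.1
    have hpos : ∀ u ∈ Set.Ico s (sInf (Set.Icc s t ∩ y ⁻¹' Set.Iic 0)), 0 ≤ y u := by
      intro u hu
      by_contra hu0
      push_neg at hu0
      have huZ : u ∈ Set.Icc s t ∩ y ⁻¹' Set.Iic 0 :=
        ⟨⟨hu.1, le_trans hu.2.le ht₀Z.1.2⟩, hu0.le⟩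
      exact absurd (csInf_le hZbdd huZ) (not_le.mpr hu.2)
    have h1 := keyA _ ht₀s hpos
    have h2 : y (sInf (Set.Icc s t ∩ y ⁻¹' Set.Iic 0)) ≤ 0 := ht₀Z.2
    linarith
  -- Step 2: P and Q monotone
  have hPQc : ∀ T, s ≤ T →
      ContinuousOn (fun t => Real.exp (B t - lam * (t - s)) * (y' t + lam * y t) - lam)
        (Set.Icc s T) ∧
      ContinuousOn (fun t => Real.exp (B t + lam * (t - s)) * (y' t - lam * y t) + lam)
        (Set.Icc s T) := by
    intro T hT
    have hB := hBc T hT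
    have hycc := hyc T hT
    have hy'cc := hy'c T hT
    have hlin : ContinuousOn (fun t : ℝ => lam * (t - s)) (Set.Icc s T) :=
      continuousOn_const.mul (continuousOn_id.sub continuousOn_const)
    constructor
    · exact (((hB.sub hlin).rexp).mul (hy'cc.add (continuousOn_const.mul hycc))).sub
        continuousOn_const
    · exact (((hB.add hlin).rexp).mul (hy'cc.sub (continuousOn_const.mul hycc))).add
        continuousOn_const
  have hlind : ∀ x : ℝ, HasDerivAt (fun t : ℝ => lam * (t - s)) lam x := by
    intro x
    simpa using (((hasDerivAt_id x).sub_const s).const_mul lam)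
  have hPd : ∀ x, s < x → HasDerivAt
      (fun t => Real.exp (B t - lam * (t - s)) * (y' t + lam * y t) - lam)
      (Real.exp (B x - lam * (x - s)) * (lam * b x * y x)) x := by
    intro x hx
    have harg : HasDerivAt (fun t => B t - lam * (t - s)) (b x - lam) x :=
      (hBd x hx).sub (hlind x)
    have hinner : HasDerivAt (fun t => y' t + lam * y t) (y'' x + lam * y' x) x :=
      (hy' x hx.le).add ((hy x hx.le).const_mul lam)
    have h := ((harg.exp).mul hinner).sub_const lam
    refine h.congr_deriv ?_
    have hODE := hode x hx.le
    have hsub : y'' x = lam ^ 2 * y x - b x * y' x := by linarith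
    rw [hsub]
    ring
  have hQd : ∀ x, s < x → HasDerivAt
      (fun t => Real.exp (B t + lam * (t - s)) * (y' t - lam * y t) + lam)
      (-(Real.exp (B x + lam * (x - s)) * (lam * b x * y x))) x := by
    intro x hx
    have harg : HasDerivAt (fun t => B t + lam * (t - s)) (b x + lam) x :=
      (hBd x hx).add (hlind x)
    have hinner : HasDerivAt (fun t => y' t - lam * y t) (y'' x - lam * y' x) x :=
      (hy' x hx.le).sub ((hy x hx.le).const_mul lam)
    have h := ((harg.exp).mul hinner).add_const lam
    refine h.congr_deriv ?_
    have hODE := hode x hx.le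
    have hsub : y'' x = lam ^ 2 * y x - b x * y' x := by linarith
    rw [hsub]
    ring
  have hPge : ∀ t, s ≤ t →
      0 ≤ Real.exp (B t - lam * (t - s)) * (y' t + lam * y t) - lam := by
    intro t ht
    have h := stmt19_mono_aux ht (hPQc t ht).1 (fun x hx => hPd x hx.1)
      (fun x hx => by
        have hb0 : 0 ≤ b x := hb_nonneg x (le_trans hs hx.1.le)
        have hy0 : 0 ≤ y x := hy_nonneg x hx.1.le
        positivity) t ⟨ht, le_refl _⟩
    have hPs : Real.exp (B s - lam * (s - s)) * (y' s + lam * y s) - lam = 0 := by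
      simp [hBs, hy's, hys]
    linarith
  have hQle : ∀ t, s ≤ t →
      Real.exp (B t + lam * (t - s)) * (y' t - lam * y t) + lam ≤ 0 := by
    intro t ht
    have h := stmt19_mono_aux ht ((hPQc t ht).2.neg)
      (fun x hx => (hQd x hx.1).neg)
      (fun x hx => by
        have hb0 : 0 ≤ b x := hb_nonneg x (le_trans hs hx.1.le)
        have hy0 : 0 ≤ y x := hy_nonneg x hx.1.le
        simp only [neg_neg]
        positivity) t ⟨ht, le_refl _⟩
    have hQs : Real.exp (B s + lam * (s - s)) * (y' s - lam * y s) + lam = 0 := by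
      simp [hBs, hy's, hys]
    simp only [Pi.neg_apply] at h
    linarith
  -- final computation
  intro t ht
  have hP := hPge t ht
  have hQ := hQle t ht
  have hBt := hBle t ht
  have hc1 : Real.exp (B t - lam * (t - s))
      = Real.exp (B t) * Real.exp (-(lam * (t - s))) := by
    rw [← Real.exp_add]; ring_nf
  have hc2 : Real.exp (B t + lam * (t - s))
      = Real.exp (B t) * Real.exp (lam * (t - s)) := by
    rw [← Real.exp_add]
  rw [hc1] at hP
  rw [hc2] at hQ
  have heB : (0:ℝ) < Real.exp (B t) := Real.exp_pos _
  have heL : (0:ℝ) < Real.exp (lam * (t - s)) := Real.exp_pos _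
  have heL' : (0:ℝ) < Real.exp (-(lam * (t - s))) := Real.exp_pos _
  have hmul : Real.exp (lam * (t - s)) * Real.exp (-(lam * (t - s))) = 1 := by
    rw [← Real.exp_add]; simp
  have hX1 : lam * Real.exp (lam * (t - s)) ≤ Real.exp (B t) * (y' t + lam * y t) := by
    have h := mul_le_mul_of_nonneg_left
      (by linarith : lam ≤ Real.exp (B t) * Real.exp (-(lam * (t - s))) * (y' t + lam * y t))
      heL.le
    have he : Real.exp (lam * (t - s)) *
        (Real.exp (B t) * Real.exp (-(lam * (t - s))) * (y' t + lam * y t))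
        = (Real.exp (lam * (t - s)) * Real.exp (-(lam * (t - s)))) *
          (Real.exp (B t) * (y' t + lam * y t)) := by ring
    rw [he, hmul, one_mul] at h
    linarith
  have hX2 : Real.exp (B t) * (y' t - lam * y t) ≤ -(lam * Real.exp (-(lam * (t - s)))) := by
    have h := mul_le_mul_of_nonneg_left
      (by linarith : Real.exp (B t) * Real.exp (lam * (t - s)) * (y' t - lam * y t) ≤ -lam)
      heL'.le
    have he : Real.exp (-(lam * (t - s))) *
        (Real.exp (B t) * Real.exp (lam * (t - s)) * (y' t - lam * y t))
        = (Real.exp (lam * (t - s)) * Real.exp (-(lam * (t - s)))) *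
          (Real.exp (B t) * (y' t - lam * y t)) := by ring
    rw [he, hmul, one_mul] at h
    linarith
  have h6 : lam * 0 ≤ lam * (2 * (Real.exp (B t) * y t)
      - (Real.exp (lam * (t - s)) + Real.exp (-(lam * (t - s))))) := by
    nlinarith [hX1, hX2]
  have h7 := le_of_mul_le_mul_left h6 hlam
  have h3 : (Real.exp (lam * (t - s)) + Real.exp (-(lam * (t - s)))) / 2
      ≤ Real.exp (B t) * y t := by linarith
  have h4 : Real.exp (-β) * Real.exp (B t) ≤ 1 := by
    rw [← Real.exp_add]
    have h5 : -β + B t ≤ 0 := by linarith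
    calc Real.exp (-β + B t) ≤ Real.exp 0 := Real.exp_le_exp.mpr h5
      _ = 1 := Real.exp_zero
  have hcosh : Real.cosh (lam * (t - s))
      = (Real.exp (lam * (t - s)) + Real.exp (-(lam * (t - s)))) / 2 := Real.cosh_eq _
  rw [ge_iff_le, hcosh]
  have hy0 : 0 ≤ y t := hy_nonneg t ht
  have m1 := mul_le_mul_of_nonneg_left h3 (Real.exp_pos (-β)).le
  have m2 : Real.exp (-β) * (Real.exp (B t) * y t) = (Real.exp (-β) * Real.exp (B t)) * y t := by
    ring
  have m3 := mul_le_mul_of_nonneg_right h4 hy0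
  rw [m2] at m1
  linarith

set_option maxHeartbeats 2000000 in
theorem stmt19 (lam : ℝ) (hlam : 0 < lam)
    (b : ℝ → ℝ) (hb_cont : ContinuousOn b (Set.Ici 0))
    (hb_nonneg : ∀ t ≥ (0:ℝ), 0 ≤ b t)
    (hb_int : MeasureTheory.IntegrableOn b (Set.Ici 0))
    (s : ℝ) (hs : 0 ≤ s)
    (y y' y'' : ℝ → ℝ)
    (hy : ∀ t ≥ s, HasDerivAt y (y' t) t)
    (hy' : ∀ t ≥ s, HasDerivAt y' (y'' t) t)
    (hode : ∀ t ≥ s, y'' t + b t * y' t - lam ^ 2 * y t = 0)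
    (hys : y s = 1) (hy's : y' s = 0) :
    ∀ t ≥ s, y t ≥ Real.exp (-(∫ τ in Set.Ici (0:ℝ), b τ)) * Real.cosh (lam * (t - s)) := by
  have hmeasb : MeasureTheory.AEStronglyMeasurable b
      (MeasureTheory.volume.restrict (Set.Ici 0)) := hb_int.1
  have hIccsub : ∀ t, s ≤ t → Set.Icc s t ⊆ Set.Ici (0:ℝ) := by
    intro t _ u hu
    exact le_trans hs hu.1
  have hII : ∀ t, s ≤ t → IntervalIntegrable b MeasureTheory.volume s t := by
    intro t ht
    have h1 : MeasureTheory.IntegrableOn b (Set.uIcc s t) := by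
      rw [Set.uIcc_of_le ht]; exact hb_int.mono_set (hIccsub t ht)
    exact h1.intervalIntegrable
  have hBd : ∀ x, s < x → HasDerivAt (fun u => ∫ τ in s..u, b τ) (b x) x := by
    intro x hx
    have hx0 : (0:ℝ) < x := lt_of_le_of_lt hs hx
    have hcb : ContinuousAt b x := hb_cont.continuousAt (Ici_mem_nhds hx0)
    exact intervalIntegral.integral_hasDerivAt_right (hII x hx.le)
      ⟨Set.Ici 0, Ici_mem_nhds hx0, hmeasb⟩ hcb
  have hBc : ∀ T, s ≤ T → ContinuousOn (fun u => ∫ τ in s..u, b τ) (Set.Icc s T) := by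
    intro T hT
    have h1 : MeasureTheory.IntegrableOn b (Set.uIcc s T) := by
      rw [Set.uIcc_of_le hT]; exact hb_int.mono_set (hIccsub T hT)
    have h2 := intervalIntegral.continuousOn_primitive_interval h1
    rwa [Set.uIcc_of_le hT] at h2
  have hBs : (∫ τ in s..s, b τ) = 0 := intervalIntegral.integral_same
  have hBle : ∀ t, s ≤ t → (∫ τ in s..t, b τ) ≤ ∫ τ in Set.Ici (0:ℝ), b τ := by
    intro t ht
    rw [intervalIntegral.integral_of_le ht]
    apply MeasureTheory.setIntegral_mono_set hb_int
    · exact (MeasureTheory.ae_restrict_iff' measurableSet_Ici).mpr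
        (Filter.Eventually.of_forall (fun x hx => hb_nonneg x hx))
    · exact Filter.Eventually.of_forall (fun x hx => le_trans hs hx.1.le)
  exact stmt19_core lam hlam b (fun u => ∫ τ in s..u, b τ) (∫ τ in Set.Ici (0:ℝ), b τ)
    s hs hb_nonneg hBd hBc hBs hBle y y' y'' hy hy' hode hys hy's
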